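/- Let n ≥ 2 be an integer. Let F : ℝⁿ → ℝⁿ be differentiable everywhere with Jacobian J(x), let x* ∈ ℝⁿ satisfy F(x*) = 0 with J* := J(x*) invertible and c := ‖J*⁻¹‖, and suppose ‖J(x) − J(x*)‖ ≤ M‖x − x*‖ for all x ∈ ℝⁿ, where M > 0. Let x_k ∈ ℝⁿ, B_k ∈ ℝ^{n×n} be generated by the greedy Broyden's method with each B_k invertible. If 48√n c M ‖x₀ − x*‖ + c‖B₀ − J(x₀)‖_F ≤ 1/3, then for all k ≥ 0, c‖B_k − J(x_k)‖_F ≤ e·(1 − 1/n)^{k/2}. -/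

import Mathlib

open Matrix

noncomputable def vecNorm {n : ℕ} (u : Fin n → ℝ) : ℝ := Real.sqrt (∑ i, u i ^ 2)

noncomputable def frobNorm {n : ℕ} (M : Matrix (Fin n) (Fin n) ℝ) : ℝ :=
  Real.sqrt (∑ i, ∑ j, M i j ^ 2)

noncomputable def specNorm {n : ℕ} (M : Matrix (Fin n) (Fin n) ℝ) : ℝ :=
  sSup {r : ℝ | ∃ u : Fin n → ℝ, vecNorm u = 1 ∧ r = vecNorm (M.mulVec u)}

noncomputable def broyd {n : ℕ} (B A : Matrix (Fin n) (Fin n) ℝ) (u : Fin n → ℝ) :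
    Matrix (Fin n) (Fin n) ℝ :=
  B + (∑ i, u i ^ 2)⁻¹ • ((A - B) * Matrix.vecMulVec u u)

noncomputable def matCLM {n : ℕ} (M : Matrix (Fin n) (Fin n) ℝ) :
    (Fin n → ℝ) →L[ℝ] (Fin n → ℝ) :=
  LinearMap.toContinuousLinearMap M.mulVecLin

lemma vecNorm_eq {n : ℕ} (u : Fin n → ℝ) :
    vecNorm u = ‖(WithLp.equiv 2 (Fin n → ℝ)).symm u‖ := by
  simp [vecNorm, EuclideanSpace.norm_eq, sq_abs]

lemma mulVec_eq {n : ℕ} (M : Matrix (Fin n) (Fin n) ℝ) (u : Fin n → ℝ) :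
    (WithLp.equiv 2 (Fin n → ℝ)).symm (M.mulVec u)
      = Matrix.toEuclideanCLM (𝕜 := ℝ) M ((WithLp.equiv 2 (Fin n → ℝ)).symm u) := by
  simp [Matrix.toLin'_apply]

lemma specNorm_eq {n : ℕ} (hn : 0 < n) (M : Matrix (Fin n) (Fin n) ℝ) :
    specNorm M = ‖Matrix.toEuclideanCLM (𝕜 := ℝ) M‖ := by
  have hmem : ∀ r ∈ {r : ℝ | ∃ u : Fin n → ℝ, vecNorm u = 1 ∧ r = vecNorm (M.mulVec u)},
      r ≤ ‖Matrix.toEuclideanCLM (𝕜 := ℝ) M‖ := by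
    rintro r ⟨u, hu, rfl⟩
    rw [vecNorm_eq, mulVec_eq]
    calc ‖Matrix.toEuclideanCLM (𝕜 := ℝ) M ((WithLp.equiv 2 (Fin n → ℝ)).symm u)‖
        ≤ ‖Matrix.toEuclideanCLM (𝕜 := ℝ) M‖ * ‖(WithLp.equiv 2 (Fin n → ℝ)).symm u‖ :=
          (Matrix.toEuclideanCLM (𝕜 := ℝ) M).le_opNorm _
      _ = ‖Matrix.toEuclideanCLM (𝕜 := ℝ) M‖ := by rw [← vecNorm_eq, hu, mul_one]
  have hne : {r : ℝ | ∃ u : Fin n → ℝ, vecNorm u = 1 ∧ r = vecNorm (M.mulVec u)}.Nonempty := by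
    refine ⟨vecNorm (M.mulVec (Pi.single ⟨0, hn⟩ 1)), Pi.single ⟨0, hn⟩ 1, ?_, rfl⟩
    simp [vecNorm, Pi.single_apply]
  have hbdd : BddAbove {r : ℝ | ∃ u : Fin n → ℝ, vecNorm u = 1 ∧ r = vecNorm (M.mulVec u)} :=
    ⟨_, hmem⟩
  apply le_antisymm (csSup_le hne hmem)
  apply ContinuousLinearMap.opNorm_le_bound
  · obtain ⟨r, hr⟩ := hne
    have h0 : 0 ≤ r := by obtain ⟨u, hu, rfl⟩ := hr; exact Real.sqrt_nonneg _
    exact le_trans h0 (le_csSup hbdd hr)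
  · intro v
    rcases eq_or_ne v 0 with rfl | hv
    · simp
    · have hvn : ‖v‖ ≠ 0 := norm_ne_zero_iff.mpr hv
      set u : Fin n → ℝ := ‖v‖⁻¹ • (WithLp.equiv 2 (Fin n → ℝ)) v with hu
      have hu1 : vecNorm u = 1 := by
        rw [vecNorm_eq]
        simp only [hu]
        rw [show (WithLp.equiv 2 (Fin n → ℝ)).symm (‖v‖⁻¹ • (WithLp.equiv 2 (Fin n → ℝ)) v)
            = ‖v‖⁻¹ • v by simp]
        rw [norm_smul]
        simp [hvn]
      have hmem2 : vecNorm (M.mulVec u) ∈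
          {r : ℝ | ∃ u : Fin n → ℝ, vecNorm u = 1 ∧ r = vecNorm (M.mulVec u)} := ⟨u, hu1, rfl⟩
      have := le_csSup hbdd hmem2
      rw [vecNorm_eq, mulVec_eq] at this
      have heq : (WithLp.equiv 2 (Fin n → ℝ)).symm u = ‖v‖⁻¹ • v := by simp [hu]
      rw [heq, _root_.map_smul, norm_smul] at this
      simp only [norm_inv, norm_norm] at this
      calc ‖Matrix.toEuclideanCLM (𝕜 := ℝ) M v‖
          = ‖v‖ * (‖v‖⁻¹ * ‖Matrix.toEuclideanCLM (𝕜 := ℝ) M v‖) := by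
            field_simp
        _ ≤ ‖v‖ * specNorm M := by
            apply mul_le_mul_of_nonneg_left _ (norm_nonneg v)
            exact this
        _ = specNorm M * ‖v‖ := mul_comm _ _

lemma vecNorm_nonneg {n : ℕ} (u : Fin n → ℝ) : 0 ≤ vecNorm u := Real.sqrt_nonneg _

lemma frob_nonneg {n : ℕ} (M : Matrix (Fin n) (Fin n) ℝ) : 0 ≤ frobNorm M := Real.sqrt_nonneg _

lemma vecNorm_sq {n : ℕ} (u : Fin n → ℝ) : vecNorm u ^ 2 = ∑ i, u i ^ 2 := by
  rw [vecNorm, Real.sq_sqrt (Finset.sum_nonneg fun i _ => sq_nonneg _)]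

lemma frob_sq {n : ℕ} (M : Matrix (Fin n) (Fin n) ℝ) :
    frobNorm M ^ 2 = ∑ i, ∑ j, M i j ^ 2 := by
  rw [frobNorm]; exact Real.sq_sqrt (Finset.sum_nonneg fun i _ =>
    Finset.sum_nonneg fun j _ => sq_nonneg _)

lemma frobNorm_eq {n : ℕ} (M : Matrix (Fin n) (Fin n) ℝ) :
    frobNorm M = ‖(WithLp.equiv 2 (Fin n × Fin n → ℝ)).symm (fun p => M p.1 p.2)‖ := by
  simp [frobNorm, EuclideanSpace.norm_eq, sq_abs, Fintype.sum_prod_type]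

lemma frob_triangle {n : ℕ} (X Y : Matrix (Fin n) (Fin n) ℝ) :
    frobNorm (X + Y) ≤ frobNorm X + frobNorm Y := by
  rw [frobNorm_eq, frobNorm_eq X, frobNorm_eq Y]
  have : ((WithLp.equiv 2 (Fin n × Fin n → ℝ)).symm (fun p => (X + Y) p.1 p.2) :
      EuclideanSpace ℝ (Fin n × Fin n))
      = (WithLp.equiv 2 (Fin n × Fin n → ℝ)).symm (fun p => X p.1 p.2)
        + (WithLp.equiv 2 (Fin n × Fin n → ℝ)).symm (fun p => Y p.1 p.2) := by
    apply (WithLp.equiv 2 (Fin n × Fin n → ℝ)).injective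
    ext p
    simp [Matrix.add_apply]
  rw [this]
  exact norm_add_le _ _

lemma mulVec_single_col {n : ℕ} (M : Matrix (Fin n) (Fin n) ℝ) (j : Fin n) :
    M.mulVec (Pi.single j 1) = fun i => M i j := by
  ext i
  simp [Matrix.mulVec, dotProduct, Pi.single_apply]

lemma col_sq {n : ℕ} (M : Matrix (Fin n) (Fin n) ℝ) (j : Fin n) :
    vecNorm (M.mulVec (Pi.single j 1)) ^ 2 = ∑ i, M i j ^ 2 := by
  rw [vecNorm_sq, mulVec_single_col]

lemma frob_sq_cols {n : ℕ} (M : Matrix (Fin n) (Fin n) ℝ) :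
    frobNorm M ^ 2 = ∑ j, vecNorm (M.mulVec (Pi.single j 1)) ^ 2 := by
  rw [frob_sq, Finset.sum_comm]
  exact Finset.sum_congr rfl fun j _ => (col_sq M j).symm

lemma frob_mulVec_le {n : ℕ} (M : Matrix (Fin n) (Fin n) ℝ) (v : Fin n → ℝ) :
    vecNorm (M.mulVec v) ≤ frobNorm M * vecNorm v := by
  have h1 : vecNorm (M.mulVec v) ^ 2 ≤ (frobNorm M * vecNorm v) ^ 2 := by
    rw [vecNorm_sq, mul_pow, frob_sq, vecNorm_sq]
    calc ∑ i, (M.mulVec v) i ^ 2 = ∑ i, (∑ j, M i j * v j) ^ 2 := by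
          simp [Matrix.mulVec, dotProduct]
      _ ≤ ∑ i, ((∑ j, M i j ^ 2) * ∑ j, v j ^ 2) := by
          apply Finset.sum_le_sum
          intro i _
          exact Finset.sum_mul_sq_le_sq_mul_sq Finset.univ _ _
      _ = (∑ i, ∑ j, M i j ^ 2) * ∑ j, v j ^ 2 := by rw [← Finset.sum_mul]
  have h2 : 0 ≤ frobNorm M * vecNorm v := mul_nonneg (frob_nonneg _) (vecNorm_nonneg _)
  nlinarith [vecNorm_nonneg (M.mulVec v)]

lemma myle_of_sq_le_sq {a b : ℝ} (hb : 0 ≤ b) (h : a ^ 2 ≤ b ^ 2) (ha : 0 ≤ a) : a ≤ b := by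
  nlinarith

lemma broyd_sub_entry {n : ℕ} (B A : Matrix (Fin n) (Fin n) ℝ) (j : Fin n) (i l : Fin n) :
    (broyd B A (Pi.single j 1) - A) i l = if l = j then 0 else (B - A) i l := by
  have hsum : (∑ i, (Pi.single j 1 : Fin n → ℝ) i ^ 2) = 1 := by
    simp [Pi.single_apply]
  simp only [broyd, hsum, inv_one, one_smul, Matrix.sub_apply, Matrix.add_apply,
    Matrix.mul_apply, Matrix.vecMulVec_apply, Pi.single_apply]
  by_cases hl : l = j
  · subst hl
    simp [Matrix.mul_apply, Matrix.vecMulVec_apply, Pi.single_apply, Matrix.sub_apply,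
      Finset.sum_ite_eq']
  · simp [Matrix.mul_apply, Matrix.vecMulVec_apply, Pi.single_apply, Matrix.sub_apply, hl,
      Finset.sum_ite_eq']

lemma broyd_frob_sq {n : ℕ} (B A : Matrix (Fin n) (Fin n) ℝ) (j : Fin n) :
    frobNorm (broyd B A (Pi.single j 1) - A) ^ 2
      = frobNorm (B - A) ^ 2 - vecNorm ((B - A).mulVec (Pi.single j 1)) ^ 2 := by
  rw [frob_sq, frob_sq, col_sq]
  rw [← Finset.sum_sub_distrib]
  apply Finset.sum_congr rfl
  intro i _
  have key : ∀ l : Fin n, (broyd B A (Pi.single j 1) - A) i l ^ 2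
      = (if l = j then 0 else (B - A) i l ^ 2) := by
    intro l
    rw [broyd_sub_entry]
    by_cases hl : l = j <;> simp [hl]
  simp only [key]
  have h1 : ∑ l, (if l = j then (0:ℝ) else (B - A) i l ^ 2)
      = ∑ l ∈ Finset.univ.erase j, (if l = j then (0:ℝ) else (B - A) i l ^ 2) := by
    refine (Finset.sum_subset (Finset.erase_subset _ _) ?_).symm
    intro l _ hl
    have : l = j := by
      by_contra h
      exact hl (Finset.mem_erase.mpr ⟨h, Finset.mem_univ _⟩)
    simp [this]
  have h2 : ∑ l ∈ Finset.univ.erase j, (if l = j then (0:ℝ) else (B - A) i l ^ 2)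
      = ∑ l ∈ Finset.univ.erase j, (B - A) i l ^ 2 := by
    apply Finset.sum_congr rfl
    intro l hl
    simp [(Finset.mem_erase.mp hl).1]
  have h3 : (B - A) i j ^ 2 + ∑ l ∈ Finset.univ.erase j, (B - A) i l ^ 2
      = ∑ l, (B - A) i l ^ 2 := Finset.add_sum_erase _ (fun l => (B - A) i l ^ 2) (Finset.mem_univ j)
  rw [h1, h2]
  linarith

lemma broyd_greedy_le {n : ℕ} (hn : 0 < n) (B A : Matrix (Fin n) (Fin n) ℝ) (j : Fin n)
    (hg : ∀ i, vecNorm ((B - A).mulVec (Pi.single i 1))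
      ≤ vecNorm ((B - A).mulVec (Pi.single j 1))) :
    frobNorm (broyd B A (Pi.single j 1) - A)
      ≤ Real.sqrt (1 - 1 / n) * frobNorm (B - A) := by
  have hq : (0:ℝ) ≤ 1 - 1 / n := by
    have : (1:ℝ) ≤ (n:ℝ) := by exact_mod_cast hn
    have h0 : (0:ℝ) < (n:ℝ) := by exact_mod_cast hn
    rw [sub_nonneg, div_le_one h0]
    exact this
  apply myle_of_sq_le_sq (mul_nonneg (Real.sqrt_nonneg _) (frob_nonneg _)) _ (frob_nonneg _)
  rw [mul_pow, Real.sq_sqrt hq, broyd_frob_sq]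
  have hsum : frobNorm (B - A) ^ 2 ≤ n * vecNorm ((B - A).mulVec (Pi.single j 1)) ^ 2 := by
    rw [frob_sq_cols]
    calc ∑ i, vecNorm ((B - A).mulVec (Pi.single i 1)) ^ 2
        ≤ ∑ _i : Fin n, vecNorm ((B - A).mulVec (Pi.single j 1)) ^ 2 := by
          apply Finset.sum_le_sum
          intro i _
          exact pow_le_pow_left₀ (vecNorm_nonneg _) (hg i) 2
      _ = n * vecNorm ((B - A).mulVec (Pi.single j 1)) ^ 2 := by
          simp [Finset.sum_const, nsmul_eq_mul]
  have h0 : (0:ℝ) < (n:ℝ) := by exact_mod_cast hn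
  have : frobNorm (B - A) ^ 2 / n ≤ vecNorm ((B - A).mulVec (Pi.single j 1)) ^ 2 :=
    (div_le_iff₀ h0).mpr (by linarith)
  have hexp : (1 - 1 / (n:ℝ)) * frobNorm (B - A) ^ 2
      = frobNorm (B - A) ^ 2 - frobNorm (B - A) ^ 2 / n := by ring
  linarith

lemma spec_nonneg {n : ℕ} (hn : 0 < n) (M : Matrix (Fin n) (Fin n) ℝ) : 0 ≤ specNorm M := by
  rw [specNorm_eq hn]; exact norm_nonneg _

lemma spec_mulVec_le {n : ℕ} (hn : 0 < n) (M : Matrix (Fin n) (Fin n) ℝ) (v : Fin n → ℝ) :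
    vecNorm (M.mulVec v) ≤ specNorm M * vecNorm v := by
  rw [vecNorm_eq, vecNorm_eq v, mulVec_eq, specNorm_eq hn]
  exact (Matrix.toEuclideanCLM (𝕜 := ℝ) M).le_opNorm _

lemma spec_le_frob {n : ℕ} (hn : 0 < n) (M : Matrix (Fin n) (Fin n) ℝ) :
    specNorm M ≤ frobNorm M := by
  rw [specNorm_eq hn]
  apply ContinuousLinearMap.opNorm_le_bound _ (frob_nonneg M)
  intro v
  have h := frob_mulVec_le M ((WithLp.equiv 2 (Fin n → ℝ)) v)
  rw [vecNorm_eq, vecNorm_eq ((WithLp.equiv 2 (Fin n → ℝ)) v), mulVec_eq] at h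
  simpa using h

lemma vecNorm_single_one {n : ℕ} (j : Fin n) : vecNorm (Pi.single j 1 : Fin n → ℝ) = 1 := by
  simp [vecNorm, Pi.single_apply]

lemma frob_le_sqrtn_spec {n : ℕ} (hn : 0 < n) (M : Matrix (Fin n) (Fin n) ℝ) :
    frobNorm M ≤ Real.sqrt n * specNorm M := by
  apply myle_of_sq_le_sq (mul_nonneg (Real.sqrt_nonneg _) (spec_nonneg hn M)) _ (frob_nonneg M)
  rw [mul_pow, Real.sq_sqrt (Nat.cast_nonneg n), frob_sq_cols]
  calc ∑ j, vecNorm (M.mulVec (Pi.single j 1)) ^ 2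
      ≤ ∑ _j : Fin n, specNorm M ^ 2 := by
        apply Finset.sum_le_sum
        intro j _
        have h := spec_mulVec_le hn M (Pi.single j 1)
        rw [vecNorm_single_one, mul_one] at h
        exact pow_le_pow_left₀ (vecNorm_nonneg _) h 2
    _ = n * specNorm M ^ 2 := by simp [Finset.sum_const, nsmul_eq_mul]

lemma frob_sub_triangle {n : ℕ} (X Y Z : Matrix (Fin n) (Fin n) ℝ) :
    frobNorm (X - Z) ≤ frobNorm (X - Y) + frobNorm (Y - Z) := by
  have : X - Z = (X - Y) + (Y - Z) := by abel
  rw [this]; exact frob_triangle _ _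

lemma vecNorm_triangle {n : ℕ} (u v : Fin n → ℝ) :
    vecNorm (u + v) ≤ vecNorm u + vecNorm v := by
  rw [vecNorm_eq, vecNorm_eq u, vecNorm_eq v]
  have : ((WithLp.equiv 2 (Fin n → ℝ)).symm (u + v) : EuclideanSpace ℝ (Fin n))
      = (WithLp.equiv 2 (Fin n → ℝ)).symm u + (WithLp.equiv 2 (Fin n → ℝ)).symm v := by
    apply (WithLp.equiv 2 (Fin n → ℝ)).injective; simp
  rw [this]; exact norm_add_le _ _

lemma vecNorm_sub_triangle {n : ℕ} (u v w : Fin n → ℝ) :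
    vecNorm (u - w) ≤ vecNorm (u - v) + vecNorm (v - w) := by
  have : u - w = (u - v) + (v - w) := by abel
  rw [this]; exact vecNorm_triangle _ _

lemma meanvalue {n : ℕ} (hn : 0 < n)
    (F : (Fin n → ℝ) → (Fin n → ℝ)) (J : (Fin n → ℝ) → Matrix (Fin n) (Fin n) ℝ)
    (hF : ∀ x, HasFDerivAt F (matCLM (J x)) x)
    (xs : Fin n → ℝ) (M : ℝ) (hMpos : 0 ≤ M)
    (hLip : ∀ x, specNorm (J x - J xs) ≤ M * vecNorm (x - xs))
    (y : Fin n → ℝ) :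
    vecNorm (F y - F xs - (J y).mulVec (y - xs)) ≤ 2 * M * vecNorm (y - xs) ^ 2 := by
  set ψ := PiLp.continuousLinearEquiv 2 ℝ (fun _ : Fin n => ℝ) with hψ
  set G : EuclideanSpace ℝ (Fin n) → EuclideanSpace ℝ (Fin n) :=
    fun z => ψ.symm (F (ψ z)) with hG
  have hψap : ∀ z : EuclideanSpace ℝ (Fin n), ψ z = WithLp.equiv 2 (Fin n → ℝ) z := fun z => rfl
  have hψs : ∀ u : Fin n → ℝ, ψ.symm u = (WithLp.equiv 2 (Fin n → ℝ)).symm u := fun u => rfl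
  set a : EuclideanSpace ℝ (Fin n) := ψ.symm xs with ha
  set b : EuclideanSpace ℝ (Fin n) := ψ.symm y with hb
  have hGd : ∀ z : EuclideanSpace ℝ (Fin n),
      HasFDerivAt G (Matrix.toEuclideanCLM (𝕜 := ℝ) (J (ψ z))) z := by
    intro z
    have h1 : HasFDerivAt (F ∘ ψ) ((matCLM (J (ψ z))).comp
        (ψ : EuclideanSpace ℝ (Fin n) →L[ℝ] (Fin n → ℝ))) z :=
      (hF (ψ z)).comp z (ψ.hasFDerivAt)
    have h2 : HasFDerivAt G (((ψ.symm : (Fin n → ℝ) →L[ℝ] EuclideanSpace ℝ (Fin n)).comp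
        ((matCLM (J (ψ z))).comp (ψ : EuclideanSpace ℝ (Fin n) →L[ℝ] (Fin n → ℝ))))) z :=
      (ψ.symm.hasFDerivAt).comp z h1
    convert h2 using 1
    exact ContinuousLinearMap.ext fun v => rfl
  have hseg : ∀ z ∈ segment ℝ a b, ‖z - a‖ ≤ ‖b - a‖ := by
    intro z hz
    obtain ⟨s, t, hs, ht, hst, rfl⟩ := hz
    have : s • a + t • b - a = t • (b - a) := by
      have hs1 : s = 1 - t := by linarith
      rw [hs1]; module
    rw [this, norm_smul]
    have h1 : ‖t‖ ≤ 1 := by rw [Real.norm_eq_abs, abs_of_nonneg ht]; linarith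
    exact mul_le_of_le_one_left (norm_nonneg _) h1
  have hbound : ∀ z ∈ segment ℝ a b,
      ‖Matrix.toEuclideanCLM (𝕜 := ℝ) (J (ψ z)) - Matrix.toEuclideanCLM (𝕜 := ℝ) (J y)‖
        ≤ 2 * M * vecNorm (y - xs) := by
    intro z hz
    have e1 : Matrix.toEuclideanCLM (𝕜 := ℝ) (J (ψ z)) - Matrix.toEuclideanCLM (𝕜 := ℝ) (J y)
        = Matrix.toEuclideanCLM (𝕜 := ℝ) (J (ψ z) - J xs)
          - Matrix.toEuclideanCLM (𝕜 := ℝ) (J y - J xs) := by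
      simp [map_sub]
    rw [e1]
    calc ‖Matrix.toEuclideanCLM (𝕜 := ℝ) (J (ψ z) - J xs)
          - Matrix.toEuclideanCLM (𝕜 := ℝ) (J y - J xs)‖
        ≤ ‖Matrix.toEuclideanCLM (𝕜 := ℝ) (J (ψ z) - J xs)‖
          + ‖Matrix.toEuclideanCLM (𝕜 := ℝ) (J y - J xs)‖ := norm_sub_le _ _
      _ = specNorm (J (ψ z) - J xs) + specNorm (J y - J xs) := by
          rw [specNorm_eq hn, specNorm_eq hn]
      _ ≤ M * vecNorm (ψ z - xs) + M * vecNorm (y - xs) := by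
          exact add_le_add (hLip _) (hLip _)
      _ ≤ 2 * M * vecNorm (y - xs) := by
          have h1 : vecNorm (ψ z - xs) ≤ vecNorm (y - xs) := by
            have e2 : (WithLp.equiv 2 (Fin n → ℝ)).symm (ψ z - xs) = z - a := by
              apply (WithLp.equiv 2 (Fin n → ℝ)).injective
              simp [ha, hψap, hψs]
            have e3 : (WithLp.equiv 2 (Fin n → ℝ)).symm (y - xs) = b - a := by
              apply (WithLp.equiv 2 (Fin n → ℝ)).injective
              simp [ha, hb, hψap, hψs]
            rw [vecNorm_eq, vecNorm_eq, e2, e3]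
            exact hseg z hz
          have h2 : M * vecNorm (ψ z - xs) ≤ M * vecNorm (y - xs) :=
            mul_le_mul_of_nonneg_left h1 hMpos
          linarith
  have key := (convex_segment a b).norm_image_sub_le_of_norm_hasFDerivWithin_le'
    (fun z _ => (hGd z).hasFDerivWithinAt) hbound
    (left_mem_segment ℝ a b) (right_mem_segment ℝ a b)
  have hGb : G b = ψ.symm (F y) := by simp [hG, hb]
  have hGa : G a = ψ.symm (F xs) := by simp [hG, ha]
  have hba : b - a = (WithLp.equiv 2 (Fin n → ℝ)).symm (y - xs) := by
    apply (WithLp.equiv 2 (Fin n → ℝ)).injective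
    simp [ha, hb, hψap, hψs]
  have hφ : Matrix.toEuclideanCLM (𝕜 := ℝ) (J y) (b - a)
      = (WithLp.equiv 2 (Fin n → ℝ)).symm ((J y).mulVec (y - xs)) := by
    rw [hba, ← mulVec_eq]
  have hLHS : G b - G a - Matrix.toEuclideanCLM (𝕜 := ℝ) (J y) (b - a)
      = (WithLp.equiv 2 (Fin n → ℝ)).symm (F y - F xs - (J y).mulVec (y - xs)) := by
    rw [hGb, hGa, hφ]
    apply (WithLp.equiv 2 (Fin n → ℝ)).injective
    simp [hψs]
  rw [hLHS] at key
  have hnorm : ‖b - a‖ = vecNorm (y - xs) := by rw [hba, ← vecNorm_eq]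
  rw [hnorm] at key
  rw [vecNorm_eq]
  calc ‖(WithLp.equiv 2 (Fin n → ℝ)).symm (F y - F xs - (J y).mulVec (y - xs))‖
      ≤ 2 * M * vecNorm (y - xs) * vecNorm (y - xs) := key
    _ = 2 * M * vecNorm (y - xs) ^ 2 := by ring

set_option maxHeartbeats 1000000 in
theorem greedy_broyden_jacobian_convergence {n : ℕ} (hn : 2 ≤ n)
    (F : (Fin n → ℝ) → (Fin n → ℝ))
    (J : (Fin n → ℝ) → Matrix (Fin n) (Fin n) ℝ)
    (hF : ∀ x, HasFDerivAt F (matCLM (J x)) x)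
    (xs : Fin n → ℝ) (hxs : F xs = 0) (hJs : IsUnit (J xs))
    (c : ℝ) (hc : c = specNorm (J xs)⁻¹)
    (M : ℝ) (hM : 0 < M)
    (hLip : ∀ x, specNorm (J x - J xs) ≤ M * vecNorm (x - xs))
    (x : ℕ → (Fin n → ℝ)) (B : ℕ → Matrix (Fin n) (Fin n) ℝ) (idx : ℕ → Fin n)
    (hBinv : ∀ k, IsUnit (B k))
    (hxrec : ∀ k, x (k + 1) = x k - (B k)⁻¹.mulVec (F (x k)))
    (hgreedy : ∀ k, ∀ i : Fin n,
      vecNorm ((B k - J (x (k + 1))).mulVec (Pi.single i 1))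
        ≤ vecNorm ((B k - J (x (k + 1))).mulVec (Pi.single (idx k) 1)))
    (hBrec : ∀ k, B (k + 1) = broyd (B k) (J (x (k + 1))) (Pi.single (idx k) 1))
    (hinit : 48 * Real.sqrt n * c * M * vecNorm (x 0 - xs)
      + c * frobNorm (B 0 - J (x 0)) ≤ 1 / 3) :
    ∀ k : ℕ, c * frobNorm (B k - J (x k))
      ≤ Real.exp 1 * (1 - 1 / (n : ℝ)) ^ ((k : ℝ) / 2) := by
  have hn0 : 0 < n := by omega
  have hn1 : (1:ℝ) ≤ (n:ℝ) := by exact_mod_cast Nat.one_le_of_lt hn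
  have hn2 : (2:ℝ) ≤ (n:ℝ) := by exact_mod_cast hn
  set q : ℝ := 1 - 1 / (n:ℝ) with hq
  have hq0 : 0 ≤ q := by
    rw [hq, sub_nonneg, div_le_one (by linarith)]; linarith
  have hqhalf : 1/2 ≤ q := by
    rw [hq]
    have : 1 / (n:ℝ) ≤ 1/2 := by
      apply div_le_div_of_nonneg_left <;> linarith
    linarith
  set s : ℝ := Real.sqrt q with hs
  have hs0 : 0 ≤ s := Real.sqrt_nonneg _
  have hssq : s ^ 2 = q := Real.sq_sqrt hq0
  have hq1 : q ≤ 1 := by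
    rw [hq]
    have : 0 ≤ 1 / (n:ℝ) := by positivity
    linarith
  have hs1 : s ≤ 1 := Real.sqrt_le_one.mpr hq1
  have hs7 : 7/10 ≤ s := by
    have h1 : Real.sqrt (1/2) ≤ s := Real.sqrt_le_sqrt hqhalf
    have h2 : (7/10 : ℝ) ≤ Real.sqrt (1/2) := by
      rw [show (7/10:ℝ) = Real.sqrt ((7/10)^2) by rw [Real.sqrt_sq (by norm_num)]]
      apply Real.sqrt_le_sqrt
      norm_num
    linarith
  have hc0 : 0 ≤ c := hc ▸ spec_nonneg hn0 _
  have hsn1 : (1:ℝ) ≤ Real.sqrt n := by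
    rw [show (1:ℝ) = Real.sqrt 1 by simp]
    exact Real.sqrt_le_sqrt hn1
  have hsn0 : 0 ≤ Real.sqrt (n:ℝ) := Real.sqrt_nonneg _
  -- abbreviations
  set r : ℕ → ℝ := fun k => vecNorm (x k - xs) with hr
  set σ : ℕ → ℝ := fun k => c * frobNorm (B k - J (x k)) with hσ
  set τ : ℕ → ℝ := fun k => σ k + 48 * Real.sqrt n * c * M * r k with hτdef
  have hr0 : ∀ k, 0 ≤ r k := fun k => vecNorm_nonneg _
  have hσ0 : ∀ k, 0 ≤ σ k := fun k => mul_nonneg hc0 (frob_nonneg _)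
  have hP0 : 0 ≤ Real.sqrt n * c * M := by positivity
  -- the inductive step
  have step : ∀ k, τ k ≤ 1/3 → τ (k+1) ≤ s * τ k := by
    intro k hτk
    have hσk : σ k ≤ 1/3 := by
      have h0 : 0 ≤ 48 * Real.sqrt n * c * M * r k := by
        have := mul_nonneg (mul_nonneg (mul_nonneg (by norm_num : (0:ℝ) ≤ 48) hsn0) hc0) hM.le
        exact mul_nonneg this (hr0 k)
      simp only [hτdef] at hτk
      linarith
    have hcrk : Real.sqrt n * c * M * r k ≤ 1/144 := by
      simp only [hτdef] at hτk
      have h48 : 48 * Real.sqrt n * c * M * r k ≤ 1/3 := by linarith [hσ0 k]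
      linarith
    have hcMrk0 : 0 ≤ c * M * r k := mul_nonneg (mul_nonneg hc0 hM.le) (hr0 k)
    have hcMrk : c * M * r k ≤ 1/144 := by
      nlinarith [mul_le_mul_of_nonneg_right hsn1 hcMrk0]
    -- bound on ‖x(k+1) - xs‖
    have hmv := meanvalue hn0 F J hF xs M hM.le hLip (x k)
    rw [hxs, sub_zero] at hmv
    have hBstep : (B k).mulVec (x (k+1) - xs)
        = (B k - J (x k)).mulVec (x k - xs)
          + ((J (x k)).mulVec (x k - xs) - F (x k)) := by
      rw [hxrec k]
      have hdet : IsUnit (B k).det := (Matrix.isUnit_iff_isUnit_det _).mp (hBinv k)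
      have : (B k).mulVec ((B k)⁻¹.mulVec (F (x k))) = F (x k) := by
        rw [Matrix.mulVec_mulVec, Matrix.mul_nonsing_inv _ hdet, Matrix.one_mulVec]
      rw [show x k - (B k)⁻¹.mulVec (F (x k)) - xs
          = (x k - xs) - (B k)⁻¹.mulVec (F (x k)) by abel]
      rw [Matrix.mulVec_sub, this, Matrix.sub_mulVec]
      abel
    have hBw : vecNorm ((B k).mulVec (x (k+1) - xs))
        ≤ frobNorm (B k - J (x k)) * r k + 2 * M * r k ^ 2 := by
      rw [hBstep]
      calc vecNorm ((B k - J (x k)).mulVec (x k - xs)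
              + ((J (x k)).mulVec (x k - xs) - F (x k)))
          ≤ vecNorm ((B k - J (x k)).mulVec (x k - xs))
            + vecNorm ((J (x k)).mulVec (x k - xs) - F (x k)) := vecNorm_triangle _ _
        _ ≤ frobNorm (B k - J (x k)) * r k + 2 * M * r k ^ 2 := by
            apply add_le_add (frob_mulVec_le _ _)
            have : (J (x k)).mulVec (x k - xs) - F (x k)
                = -(F (x k) - (J (x k)).mulVec (x k - xs)) := by abel
            rw [this, show ∀ u : Fin n → ℝ, vecNorm (-u) = vecNorm u from
              fun u => by simp [vecNorm]]
            exact hmv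
    -- split J* w
    have hw : x (k+1) - xs = (J xs)⁻¹.mulVec ((J xs).mulVec (x (k+1) - xs)) := by
      have hdet : IsUnit (J xs).det := (Matrix.isUnit_iff_isUnit_det _).mp hJs
      rw [Matrix.mulVec_mulVec, Matrix.nonsing_inv_mul _ hdet, Matrix.one_mulVec]
    have hJw : (J xs).mulVec (x (k+1) - xs)
        = (B k).mulVec (x (k+1) - xs) - (B k - J xs).mulVec (x (k+1) - xs) := by
      rw [Matrix.sub_mulVec]; abel
    have hBJs : c * frobNorm (B k - J xs) ≤ 1/3 + 1/144 := by
      have h1 : frobNorm (B k - J xs) ≤ frobNorm (B k - J (x k)) + frobNorm (J (x k) - J xs) :=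
        frob_sub_triangle _ _ _
      have h2 : frobNorm (J (x k) - J xs) ≤ Real.sqrt n * (M * r k) :=
        (frob_le_sqrtn_spec hn0 _).trans (by
          apply mul_le_mul_of_nonneg_left (hLip (x k)) hsn0)
      have h1' : frobNorm (B k - J xs)
          ≤ frobNorm (B k - J (x k)) + Real.sqrt n * (M * r k) := by linarith
      have h3 := mul_le_mul_of_nonneg_left h1' hc0
      have h4 : c * (frobNorm (B k - J (x k)) + Real.sqrt n * (M * r k))
          = σ k + Real.sqrt n * c * M * r k := by simp only [hσ]; ring
      rw [h4] at h3
      linarith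
    have hrk1 : r (k+1) ≤ (5/9) * r k := by
      have h1 : r (k+1) ≤ c * vecNorm ((J xs).mulVec (x (k+1) - xs)) := by
        simp only [hr]
        calc vecNorm (x (k+1) - xs)
            = vecNorm ((J xs)⁻¹.mulVec ((J xs).mulVec (x (k+1) - xs))) := by rw [← hw]
          _ ≤ specNorm (J xs)⁻¹ * vecNorm ((J xs).mulVec (x (k+1) - xs)) :=
              spec_mulVec_le hn0 _ _
          _ = c * vecNorm ((J xs).mulVec (x (k+1) - xs)) := by rw [hc]
      have h2 : vecNorm ((J xs).mulVec (x (k+1) - xs))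
          ≤ (frobNorm (B k - J (x k)) * r k + 2 * M * r k ^ 2)
            + frobNorm (B k - J xs) * r (k+1) := by
        rw [hJw]
        calc vecNorm ((B k).mulVec (x (k+1) - xs) - (B k - J xs).mulVec (x (k+1) - xs))
            ≤ vecNorm ((B k).mulVec (x (k+1) - xs))
              + vecNorm (-(B k - J xs).mulVec (x (k+1) - xs)) := by
              rw [sub_eq_add_neg]; exact vecNorm_triangle _ _
          _ ≤ (frobNorm (B k - J (x k)) * r k + 2 * M * r k ^ 2)
              + frobNorm (B k - J xs) * r (k+1) := by
              apply add_le_add hBw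
              rw [show ∀ u : Fin n → ℝ, vecNorm (-u) = vecNorm u from
                fun u => by simp [vecNorm]]
              exact frob_mulVec_le _ _
      have h3 : r (k+1) ≤ σ k * r k + 2 * (c * M * r k) * r k
          + (c * frobNorm (B k - J xs)) * r (k+1) := by
        calc r (k+1) ≤ c * ((frobNorm (B k - J (x k)) * r k + 2 * M * r k ^ 2)
              + frobNorm (B k - J xs) * r (k+1)) :=
            h1.trans (mul_le_mul_of_nonneg_left h2 hc0)
          _ = σ k * r k + 2 * (c * M * r k) * r k
              + (c * frobNorm (B k - J xs)) * r (k+1) := by simp only [hσ]; ring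
      have hBJ0 : 0 ≤ c * frobNorm (B k - J xs) := mul_nonneg hc0 (frob_nonneg _)
      nlinarith [h3, mul_nonneg (sub_nonneg.mpr hBJs) (hr0 (k+1)),
        mul_nonneg (sub_nonneg.mpr hσk) (hr0 k),
        mul_nonneg (sub_nonneg.mpr hcMrk) (hr0 k), hr0 k, hr0 (k+1), hBJ0]
    -- Frobenius contraction
    have hσk1 : σ (k+1) ≤ s * (σ k + Real.sqrt n * c * M * (r k + r (k+1))) := by
      have hgl := broyd_greedy_le hn0 (B k) (J (x (k+1))) (idx k) (hgreedy k)
      rw [← hBrec k] at hgl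
      have htri : frobNorm (B k - J (x (k+1)))
          ≤ frobNorm (B k - J (x k)) + (Real.sqrt n * (M * r k) + Real.sqrt n * (M * r (k+1))) := by
        have t1 : frobNorm (B k - J (x (k+1)))
            ≤ frobNorm (B k - J (x k)) + frobNorm (J (x k) - J (x (k+1))) :=
          frob_sub_triangle _ _ _
        have t2 : frobNorm (J (x k) - J (x (k+1)))
            ≤ frobNorm (J (x k) - J xs) + frobNorm (J xs - J (x (k+1))) :=
          frob_sub_triangle _ _ _
        have t3 : frobNorm (J (x k) - J xs) ≤ Real.sqrt n * (M * r k) :=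
          (frob_le_sqrtn_spec hn0 _).trans
            (mul_le_mul_of_nonneg_left (hLip (x k)) hsn0)
        have t4 : frobNorm (J xs - J (x (k+1))) ≤ Real.sqrt n * (M * r (k+1)) := by
          rw [show J xs - J (x (k+1)) = -(J (x (k+1)) - J xs) by abel,
            show ∀ X : Matrix (Fin n) (Fin n) ℝ, frobNorm (-X) = frobNorm X from
              fun X => by simp [frobNorm]]
          exact (frob_le_sqrtn_spec hn0 _).trans
            (mul_le_mul_of_nonneg_left (hLip (x (k+1))) hsn0)
        linarith
      calc σ (k+1) = c * frobNorm (B (k+1) - J (x (k+1))) := rfl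
        _ ≤ c * (s * frobNorm (B k - J (x (k+1)))) := mul_le_mul_of_nonneg_left hgl hc0
        _ ≤ c * (s * (frobNorm (B k - J (x k))
            + (Real.sqrt n * (M * r k) + Real.sqrt n * (M * r (k+1))))) := by
            apply mul_le_mul_of_nonneg_left _ hc0
            exact mul_le_mul_of_nonneg_left htri hs0
        _ = s * (σ k + Real.sqrt n * c * M * (r k + r (k+1))) := by
            simp only [hσ]; ring
    -- combine
    have hkey : s * (r k + r (k+1)) + 48 * r (k+1) ≤ 48 * s * r k := by
      nlinarith [mul_le_mul_of_nonneg_left hrk1 hs0, hr0 k, hr0 (k+1),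
        mul_nonneg hs0 (hr0 k), mul_le_mul_of_nonneg_right hs7 (hr0 k)]
    have := mul_le_mul_of_nonneg_left hkey hP0
    simp only [hτdef]
    calc σ (k+1) + 48 * Real.sqrt n * c * M * r (k+1)
        ≤ s * (σ k + Real.sqrt n * c * M * (r k + r (k+1)))
          + 48 * Real.sqrt n * c * M * r (k+1) := by linarith
      _ ≤ s * σ k + 48 * s * (Real.sqrt n * c * M * r k) := by nlinarith [this]
      _ = s * (σ k + 48 * Real.sqrt n * c * M * r k) := by ring
  -- main induction
  have main : ∀ k, τ k ≤ (1/3) * s ^ k := by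
    intro k
    induction k with
    | zero =>
      simp only [hτdef, pow_zero, mul_one]
      simp only [hσ, hr]
      linarith [hinit]
    | succ k ih =>
      have hτk13 : τ k ≤ 1/3 := by
        have hsk : s ^ k ≤ 1 := pow_le_one₀ hs0 hs1
        nlinarith
      calc τ (k+1) ≤ s * τ k := step k hτk13
        _ ≤ s * ((1/3) * s ^ k) := mul_le_mul_of_nonneg_left ih hs0
        _ = (1/3) * s ^ (k+1) := by ring
  -- conclusion
  intro k
  have h1 : c * frobNorm (B k - J (x k)) ≤ (1/3) * s ^ k := by
    have : σ k ≤ τ k := by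
      simp only [hτdef]
      have h0 : 0 ≤ 48 * Real.sqrt n * c * M * r k := by
        have := mul_nonneg (mul_nonneg (mul_nonneg (by norm_num : (0:ℝ) ≤ 48) hsn0) hc0) hM.le
        exact mul_nonneg this (hr0 k)
      linarith
    exact le_trans this (main k)
  have hpow : (s : ℝ) ^ k = q ^ ((k : ℝ) / 2) := by
    rw [hs, Real.sqrt_eq_rpow, ← Real.rpow_natCast (q ^ ((1:ℝ)/2)) k, ← Real.rpow_mul hq0]
    congr 1
    ring
  have he : (1/3 : ℝ) ≤ Real.exp 1 := by
    have := Real.add_one_le_exp 1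
    linarith
  have hqpow : 0 ≤ q ^ ((k : ℝ) / 2) := Real.rpow_nonneg hq0 _
  calc c * frobNorm (B k - J (x k)) ≤ (1/3) * s ^ k := h1
    _ = (1/3) * q ^ ((k : ℝ) / 2) := by rw [hpow]
    _ ≤ Real.exp 1 * q ^ ((k : ℝ) / 2) := mul_le_mul_of_nonneg_right he hqpow
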